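/- Let G be a cograph (a finite simple graph with no induced path on four vertices). Then every acyclic coloring of G is also a star coloring of G. -/

import Mathlib

open SimpleGraph

/-- A proper vertex coloring: adjacent vertices receive distinct colors. -/
def IsProperColoring {V α : Type*} (G : SimpleGraph V) (φ : V → α) : Prop :=
  ∀ ⦃u v : V⦄, G.Adj u v → φ u ≠ φ v

/-- An acyclic coloring: a proper coloring such that the subgraph induced by the
union of any two color classes contains no cycle. -/
def IsAcyclicColoring {V α : Type*} (G : SimpleGraph V) (φ : V → α) : Prop :=
  IsProperColoring G φ ∧
    ∀ c₁ c₂ : α, (G.induce {v | φ v = c₁ ∨ φ v = c₂}).IsAcyclic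

/-- A graph contains a path on four (distinct) vertices `a-b-c-d`,
not necessarily induced. -/
def HasP4 {V : Type*} (G : SimpleGraph V) : Prop :=
  ∃ a b c d : V, a ≠ b ∧ a ≠ c ∧ a ≠ d ∧ b ≠ c ∧ b ≠ d ∧ c ≠ d ∧
    G.Adj a b ∧ G.Adj b c ∧ G.Adj c d

/-- A star coloring: a proper coloring such that the subgraph induced by the
union of any two color classes contains no path on four vertices. -/
def IsStarColoring {V α : Type*} (G : SimpleGraph V) (φ : V → α) : Prop :=
  IsProperColoring G φ ∧
    ∀ c₁ c₂ : α, ¬ HasP4 (G.induce {v | φ v = c₁ ∨ φ v = c₂})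

/-- A cograph: a graph with no induced path on four vertices. -/
def IsCograph {V : Type*} (G : SimpleGraph V) : Prop :=
  ¬ ∃ a b c d : V, a ≠ b ∧ a ≠ c ∧ a ≠ d ∧ b ≠ c ∧ b ≠ d ∧ c ≠ d ∧
    G.Adj a b ∧ G.Adj b c ∧ G.Adj c d ∧
    ¬ G.Adj a c ∧ ¬ G.Adj a d ∧ ¬ G.Adj b d

/-- The acyclic chromatic number: the least number of colors in an acyclic coloring. -/
noncomputable def acyclicChromaticNumber {V : Type*} (G : SimpleGraph V) : ℕ :=
  sInf {n : ℕ | ∃ φ : V → Fin n, IsAcyclicColoring G φ}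

/-- The star chromatic number: the least number of colors in a star coloring. -/
noncomputable def starChromaticNumber {V : Type*} (G : SimpleGraph V) : ℕ :=
  sInf {n : ℕ | ∃ φ : V → Fin n, IsStarColoring G φ}

/-- A cycle is induced if the only edges of the graph among its vertices
are the edges of the cycle. -/
def SimpleGraph.Walk.IsInducedCycle {V : Type*} {G : SimpleGraph V} {v : V}
    (p : G.Walk v v) : Prop :=
  p.IsCycle ∧ ∀ u w : V, u ∈ p.support → w ∈ p.support → G.Adj u w → s(u, w) ∈ p.edges

/-- A graph is chordal if it has no induced cycle on four or more vertices. -/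
def IsChordal {V : Type*} (G : SimpleGraph V) : Prop :=
  ∀ (v : V) (p : G.Walk v v), p.IsInducedCycle → p.length ≤ 3

/-- The treewidth of `G`: the minimum of `ω(G⁺) - 1` over all triangulations
(chordal supergraphs on the same vertex set) `G⁺` of `G`. -/
noncomputable def treewidth {V : Type*} (G : SimpleGraph V) : ℕ :=
  sInf {k : ℕ | ∃ H : SimpleGraph V, G ≤ H ∧ IsChordal H ∧ k = H.cliqueNum - 1}

/-- An interval graph: vertices can be mapped to real closed intervals so that
two distinct vertices are adjacent iff their intervals intersect. -/
def IsIntervalGraph {V : Type*} (G : SimpleGraph V) : Prop :=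
  ∃ f : V → ℝ × ℝ, ∀ u v : V, u ≠ v →
    (G.Adj u v ↔ (Set.Icc (f u).1 (f u).2 ∩ Set.Icc (f v).1 (f v).2).Nonempty)

/-- The pathwidth of `G`: the minimum of `ω(G⁺) - 1` over all intervalizations
(interval supergraphs on the same vertex set) `G⁺` of `G`. -/
noncomputable def pathwidth {V : Type*} (G : SimpleGraph V) : ℕ :=
  sInf {k : ℕ | ∃ H : SimpleGraph V, G ≤ H ∧ IsIntervalGraph H ∧ k = H.cliqueNum - 1}

/-- The join of two graphs on disjoint vertex sets: their disjoint union together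
with all edges between the two sides. -/
def SimpleGraph.join {V₁ V₂ : Type*} (G₁ : SimpleGraph V₁) (G₂ : SimpleGraph V₂) :
    SimpleGraph (V₁ ⊕ V₂) where
  Adj x y :=
    match x, y with
    | Sum.inl a, Sum.inl b => G₁.Adj a b
    | Sum.inr a, Sum.inr b => G₂.Adj a b
    | Sum.inl _, Sum.inr _ => True
    | Sum.inr _, Sum.inl _ => True
  symm := by constructor; rintro (a | a) (b | b) h <;> simp_all <;> exact h.symm
  loopless := by constructor; rintro (a | a) h <;> simp_all


/-- Every acyclic coloring of a cograph is a star coloring. -/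
theorem acyclic_coloring_is_star_coloring_of_cograph {V : Type*} [Fintype V]
    (G : SimpleGraph V) (hG : IsCograph G) (φ : V → ℕ)
    (hφ : IsAcyclicColoring G φ) : IsStarColoring G φ := by
  obtain ⟨hprop, hacyc⟩ := hφ
  refine ⟨hprop, ?_⟩
  rintro c₁ c₂ ⟨a, b, c, d, hab, hac, had, hbc, hbd, hcd, eab, ebc, ecd⟩
  -- underlying adjacencies
  have gab : G.Adj a.1 b.1 := eab
  have gbc : G.Adj b.1 c.1 := ebc
  have gcd : G.Adj c.1 d.1 := ecd
  have vab : a.1 ≠ b.1 := fun h => hab (Subtype.ext h)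
  have vac : a.1 ≠ c.1 := fun h => hac (Subtype.ext h)
  have vad : a.1 ≠ d.1 := fun h => had (Subtype.ext h)
  have vbc : b.1 ≠ c.1 := fun h => hbc (Subtype.ext h)
  have vbd : b.1 ≠ d.1 := fun h => hbd (Subtype.ext h)
  have vcd : c.1 ≠ d.1 := fun h => hcd (Subtype.ext h)
  -- colors
  have ma := a.2; have mb := b.2; have mc := c.2; have md := d.2
  simp only [Set.mem_setOf_eq] at ma mb mc md
  have hφac : φ a.1 = φ c.1 := by
    rcases ma with h1 | h1 <;> rcases mb with h2 | h2 <;> rcases mc with h3 | h3 <;>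
      first
        | (exact h1.trans h3.symm)
        | (exact absurd (h1.trans h2.symm) (hprop gab))
        | (exact absurd (h2.trans h3.symm) (hprop gbc))
  have hφbd : φ b.1 = φ d.1 := by
    rcases mb with h1 | h1 <;> rcases mc with h2 | h2 <;> rcases md with h3 | h3 <;>
      first
        | (exact h1.trans h3.symm)
        | (exact absurd (h1.trans h2.symm) (hprop gbc))
        | (exact absurd (h2.trans h3.symm) (hprop gcd))
  have nac : ¬ G.Adj a.1 c.1 := fun h => hprop h hφac
  have nbd : ¬ G.Adj b.1 d.1 := fun h => hprop h hφbd
  have gad : G.Adj a.1 d.1 := by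
    by_contra hnad
    exact hG ⟨a.1, b.1, c.1, d.1, vab, vac, vad, vbc, vbd, vcd,
      gab, gbc, gcd, nac, hnad, nbd⟩
  -- build a 4-cycle in the induced graph
  have eda : (G.induce {v | φ v = c₁ ∨ φ v = c₂}).Adj d a := gad.symm
  let q : (G.induce {v | φ v = c₁ ∨ φ v = c₂}).Walk b a :=
    Walk.cons ebc (Walk.cons ecd (Walk.cons eda Walk.nil))
  have hq : q.IsPath := by
    refine Walk.IsPath.cons (Walk.IsPath.cons (Walk.IsPath.cons ?_ ?_) ?_) ?_
    · exact Walk.IsPath.nil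
    · simp [had.symm, hcd]
    · simp [hcd, hac.symm]
    · simp [hbc, hbd, hab.symm]
  have hcyc : (Walk.cons eab q).IsCycle := by
    rw [Walk.cons_isCycle_iff]
    refine ⟨hq, ?_⟩
    simp only [q, Walk.edges_cons, Walk.edges_nil, List.mem_cons, List.not_mem_nil,
      or_false, Sym2.eq_iff]
    tauto
  exact hacyc c₁ c₂ _ hcyc
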